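/- Let N be an isolating neighbourhood for a continuous flow, O an open subset of fr N consisting entirely of transverse entry points, and p ∈ O. Then there exist a neighbourhood V ⊆ O of p in fr N and δ > 0 such that the flow map φ restricted to V × (-δ,δ) is a homeomorphism onto its image U = φ(V × (-δ,δ)), U is an open neighbourhood of p in the phase space, and U ∩ N = φ(V × [0,δ)). -/

import Mathlib

open Set

lemma crossing_aux {X : Type*} [TopologicalSpace X] {f : ℝ → X} (hf : Continuous f)
    {C : Set X} (hC : IsClosed C) {a b : ℝ} (hab : a < b)
    (ha : f a ∉ C) (hb : f b ∈ C) :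
    ∃ t ∈ Ioc a b, f t ∈ C ∧ f t ∈ closure Cᶜ ∧ ∀ s ∈ Ico a t, f s ∉ C := by
  set T : Set ℝ := {s ∈ Icc a b | f s ∈ C} with hT
  have hTne : T.Nonempty := ⟨b, ⟨le_of_lt hab, le_refl b⟩, hb⟩
  have hTbdd : BddBelow T := ⟨a, fun s hs => hs.1.1⟩
  have hTclosed : IsClosed T := by
    have : T = Icc a b ∩ f ⁻¹' C := by
      ext s; simp only [hT, mem_sep_iff, mem_inter_iff, mem_preimage]
    rw [this]; exact isClosed_Icc.inter (hC.preimage hf)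
  have htmem : sInf T ∈ T := hTclosed.csInf_mem hTne hTbdd
  set t := sInf T with ht
  have hta : a < t := by
    rcases lt_or_eq_of_le htmem.1.1 with h | h
    · exact h
    · exact absurd (h ▸ htmem.2) ha
  have hnot : ∀ s ∈ Ico a t, f s ∉ C := by
    intro s hs hsC
    have : s ∈ T := ⟨⟨hs.1, le_trans hs.2.le htmem.1.2⟩, hsC⟩
    exact absurd (csInf_le hTbdd this) (not_le.mpr hs.2)
  refine ⟨t, ⟨hta, htmem.1.2⟩, htmem.2, ?_, hnot⟩
  have h1 : t ∈ closure (Ico a t) := by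
    rw [closure_Ico (ne_of_lt hta)]; exact ⟨le_of_lt hta, le_refl t⟩
  have h2 : f t ∈ closure (f '' Ico a t) :=
    image_closure_subset_closure_image hf ⟨t, h1, rfl⟩
  refine closure_mono ?_ h2
  rintro y ⟨s, hs, rfl⟩
  exact hnot s hs

theorem stmt8 {X : Type*} [MetricSpace X]
    (φ : ℝ → X → X)
    (hφcont : Continuous fun q : ℝ × X => φ q.1 q.2)
    (hφzero : ∀ p, φ 0 p = p)
    (hφadd : ∀ s t p, φ (s + t) p = φ s (φ t p))
    (N : Set X) (hN : IsCompact N)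
    (hiso : ∀ p ∈ frontier N, ¬ ∀ t : ℝ, φ t p ∈ N)
    (O : Set X) (hOsub : O ⊆ frontier N)
    (hOopen : ∃ W : Set X, IsOpen W ∧ O = W ∩ frontier N)
    (htrans : ∀ q ∈ O, ∃ ε : ℝ, 0 < ε ∧ (∀ t ∈ Ioo (-ε) (0:ℝ), φ t q ∉ N) ∧
      (∀ t ∈ Ioo (0:ℝ) ε, φ t q ∈ interior N))
    (p : X) (hp : p ∈ O) :
    ∃ (V : Set X) (δ : ℝ), 0 < δ ∧ V ⊆ O ∧ V ∈ nhdsWithin p (frontier N) ∧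
      InjOn (fun q : ℝ × X => φ q.1 q.2) (Ioo (-δ) δ ×ˢ V) ∧
      IsOpen ((fun q : ℝ × X => φ q.1 q.2) '' (Ioo (-δ) δ ×ˢ V)) ∧
      p ∈ (fun q : ℝ × X => φ q.1 q.2) '' (Ioo (-δ) δ ×ˢ V) ∧
      (fun q : ℝ × X => φ q.1 q.2) '' (Ioo (-δ) δ ×ˢ V) ∩ N
        = (fun q : ℝ × X => φ q.1 q.2) '' (Ico 0 δ ×ˢ V) ∧
      ∃ e : (Ioo (-δ) δ ×ˢ V : Set (ℝ × X)) ≃ₜ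
          ((fun q : ℝ × X => φ q.1 q.2) '' (Ioo (-δ) δ ×ˢ V) : Set X),
        ∀ x : (Ioo (-δ) δ ×ˢ V : Set (ℝ × X)), (e x : X) = φ (x : ℝ × X).1 (x : ℝ × X).2 := by
  classical
  obtain ⟨W, hWopen, hOW⟩ := hOopen
  obtain ⟨ε, hε, hεneg, hεpos⟩ := htrans p hp
  set Φ : ℝ × X → X := fun q => φ q.1 q.2 with hΦdef
  have hNc : IsClosed N := hN.isClosed
  have hfr : frontier N = N \ interior N := hNc.frontier_eq
  have hfrN : frontier N ⊆ N := by rw [hfr]; exact diff_subset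
  have hfrI : ∀ x ∈ frontier N, x ∉ interior N := fun x hx => (hfr ▸ hx).2
  have hφt : ∀ t : ℝ, Continuous (φ t) := fun t =>
    hφcont.comp (continuous_const.prodMk continuous_id)
  have horb : ∀ x : X, Continuous fun t => φ t x := fun x =>
    hφcont.comp (continuous_id.prodMk continuous_const)
  have hcanc : ∀ (s t : ℝ) (x : X), φ s (φ t x) = φ (s + t) x :=
    fun s t x => (hφadd s t x).symm
  have hinv : ∀ (t : ℝ) (x : X), φ (-t) (φ t x) = x := by
    intro t x; rw [hcanc, neg_add_cancel, hφzero]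
  have hinv2 : ∀ (t : ℝ) (x : X), φ t (φ (-t) x) = x := by
    intro t x; rw [hcanc, add_neg_cancel, hφzero]
  -- tube lemma
  have htube : ∀ (q₀ : X) (C : Set X), IsClosed C → ∀ η : ℝ,
      (∀ t ∈ Icc (-η) η, φ t q₀ ∉ C) →
      ∀ᶠ x in nhds q₀, ∀ t ∈ Icc (-η) η, φ t x ∉ C := by
    intro q₀ C hC η h
    apply (isCompact_Icc (a := -η) (b := η)).eventually_forall_of_forall_eventually
    intro t ht
    have hc2 : Continuous fun z : X × ℝ => φ z.2 z.1 :=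
      hφcont.comp (continuous_snd.prodMk continuous_fst)
    have hopen : IsOpen {z : X × ℝ | φ z.2 z.1 ∉ C} := by
      have : {z : X × ℝ | φ z.2 z.1 ∉ C} = ((fun z : X × ℝ => φ z.2 z.1) ⁻¹' C)ᶜ := rfl
      rw [this]
      exact (hC.preimage hc2).isOpen_compl
    exact hopen.eventually_mem (h t ht)
  -- p's own data
  have hpW : p ∈ W := (hOW ▸ hp).1
  have hpfr : p ∈ frontier N := hOsub hp
  set K : Set X := frontier N \ W with hK
  have hKc : IsClosed K := isClosed_frontier.sdiff hWopen
  have hpK : ∀ t ∈ Icc (-(ε/2)) (ε/2), φ t p ∉ K := by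
    intro t ht hmem
    rcases lt_trichotomy t 0 with h | h | h
    · exact hεneg t ⟨by linarith [ht.1], h⟩ (hfrN hmem.1)
    · subst h; rw [hφzero] at hmem; exact hmem.2 hpW
    · exact hfrI _ hmem.1 (hεpos t ⟨h, by linarith [ht.2]⟩)
  obtain ⟨ρ, hρ, hball⟩ := Metric.eventually_nhds_iff.mp (htube p K hKc (ε/2) hpK)
  -- the neighbourhood V
  set Wv : Set X := W ∩ Metric.ball p ρ with hWv
  have hWvopen : IsOpen Wv := hWopen.inter Metric.isOpen_ball
  set V : Set X := Wv ∩ frontier N with hV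
  have hVO : V ⊆ O := by rw [hOW]; exact fun x hx => ⟨hx.1.1, hx.2⟩
  have hVfr : V ⊆ frontier N := fun x hx => hx.2
  have hVball : ∀ q ∈ V, dist q p < ρ := fun q hq => Metric.mem_ball.mp hq.1.2
  have hpV : p ∈ V := ⟨⟨hpW, Metric.mem_ball_self hρ⟩, hpfr⟩
  have hVnhds : V ∈ nhdsWithin p (frontier N) :=
    mem_nhdsWithin.mpr ⟨Wv, hWvopen, ⟨hpW, Metric.mem_ball_self hρ⟩, Subset.rfl⟩
  -- uniform transversality
  have hPpos : ∀ q ∈ V, ∀ t : ℝ, 0 < t → t ≤ ε/2 → φ t q ∈ interior N := by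
    intro q hq t ht htδ
    by_contra hcon
    obtain ⟨εq, hεq, hqneg, hqpos⟩ := htrans q (hVO hq)
    set a := min t εq / 2 with hadef
    have hmin : 0 < min t εq := lt_min ht hεq
    have ha0 : 0 < a := by positivity
    have hat : a < t := by
      have := min_le_left t εq; simp only [hadef]; linarith
    have haε : a < εq := by
      have := min_le_right t εq; simp only [hadef]; linarith
    have hfa : φ a q ∈ interior N := hqpos a ⟨ha0, haε⟩
    obtain ⟨t', ht', hC1, hC2, hprev⟩ :=
      crossing_aux (f := fun s => φ s q) (horb q)
        (isOpen_interior (s := N)).isClosed_compl hat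
        (by simpa using hfa) (by simpa using hcon)
    set r := φ t' q with hrdef
    rw [compl_compl] at hC2
    have hrN : r ∈ N := by
      have h := closure_mono (interior_subset (s := N)) hC2
      rwa [hNc.closure_eq] at h
    have hrint : r ∉ interior N := hC1
    have hrfr : r ∈ frontier N := by rw [hfr]; exact ⟨hrN, hrint⟩
    have hall : ∀ s : ℝ, 0 < s → s < t' → φ s q ∈ interior N := by
      intro s hs hst'
      by_cases hsa : s < a
      · exact hqpos s ⟨hs, hsa.trans haε⟩
      · have := hprev s ⟨not_lt.mp hsa, hst'⟩
        simpa using this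
    have hrK : r ∉ K :=
      hball (hVball q hq) t' ⟨by linarith [ht'.1], by linarith [ht'.2]⟩
    have hrO : r ∈ O := by
      rw [hOW]
      refine ⟨?_, hrfr⟩
      by_contra h
      exact hrK ⟨hrfr, h⟩
    obtain ⟨εr, hεr, hrneg, _⟩ := htrans r hrO
    set v := min t' εr / 2 with hvdef
    have hminv : 0 < min t' εr := lt_min (lt_trans ha0 ht'.1) hεr
    have hv0 : 0 < v := by positivity
    have hvt : v < t' := by
      have := min_le_left t' εr; simp only [hvdef]; linarith
    have hvε : v < εr := by
      have := min_le_right t' εr; simp only [hvdef]; linarith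
    have hout : φ (-v) r ∉ N := hrneg (-v) ⟨by linarith, by linarith⟩
    have heq : φ (-v + t') q = φ (-v) r := hφadd (-v) t' q
    have hin : φ (-v + t') q ∈ interior N := hall (-v + t') (by linarith) (by linarith)
    exact hout (heq ▸ interior_subset hin)
  have hPneg : ∀ q ∈ V, ∀ t : ℝ, -(ε/2) ≤ t → t < 0 → φ t q ∉ N := by
    intro q hq t ht1 ht2 hcon
    obtain ⟨εq, hεq, hqneg, hqpos⟩ := htrans q (hVO hq)
    have htεq : t ≤ -εq := by
      by_contra h
      exact hqneg t ⟨lt_of_not_ge fun h' => h (by linarith), ht2⟩ hcon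
    have hg : Continuous fun u : ℝ => φ (-u) q := (horb q).comp continuous_neg
    have hab : εq/2 < -t := by linarith
    have hga : φ (-(εq/2)) q ∉ N := hqneg (-(εq/2)) ⟨by linarith, by linarith⟩
    have hgb : φ (-(-t)) q ∈ N := by rwa [neg_neg]
    obtain ⟨u, hu, hgu, hgcl, hprev⟩ :=
      crossing_aux (f := fun u : ℝ => φ (-u) q) hg hNc hab hga hgb
    set r := φ (-u) q with hrdef
    have hrfr : r ∈ frontier N := by
      rw [frontier_eq_closure_inter_closure, hNc.closure_eq]
      exact ⟨hgu, hgcl⟩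
    have hrK : r ∉ K :=
      hball (hVball q hq) (-u) ⟨by linarith [hu.2], by linarith [hu.1, hεq]⟩
    have hrO : r ∈ O := by
      rw [hOW]
      refine ⟨?_, hrfr⟩
      by_contra h
      exact hrK ⟨hrfr, h⟩
    obtain ⟨εr, hεr, _, hrpos⟩ := htrans r hrO
    set v := min u εr / 2 with hvdef
    have hminv : 0 < min u εr := lt_min (by linarith [hu.1, hεq]) hεr
    have hv0 : 0 < v := by positivity
    have hvu : v < u := by
      have := min_le_left u εr; simp only [hvdef]; linarith
    have hvε : v < εr := by
      have := min_le_right u εr; simp only [hvdef]; linarith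
    have hin : φ v r ∈ interior N := hrpos v ⟨hv0, hvε⟩
    have heq : φ (v + -u) q = φ v r := hφadd v (-u) q
    have hinN : φ (v + -u) q ∈ N := heq ▸ interior_subset hin
    by_cases hcase : u - v < εq
    · exact hqneg (v + -u) ⟨by linarith, by linarith⟩ hinN
    · have h1 := hprev (u - v) ⟨by linarith, by linarith⟩
      have h2 : -(u - v) = v + -u := by ring
      rw [h2] at h1
      exact h1 hinN
  -- injectivity
  have hinj : InjOn Φ (Ioo (-(ε/4)) (ε/4) ×ˢ V) := by
    rintro ⟨t, q⟩ hx ⟨s, q'⟩ hy heq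
    obtain ⟨hxt, hxq⟩ := mem_prod.mp hx
    obtain ⟨hyt, hyq⟩ := mem_prod.mp hy
    have heq' : φ t q = φ s q' := heq
    have hq'eq : φ (t - s) q = q' := by
      have h1 : φ (-s + t) q = φ (-s) (φ t q) := hφadd (-s) t q
      rw [heq', hinv] at h1
      have h2 : t - s = -s + t := by ring
      rw [h2, h1]
    have hu0 : t - s = 0 := by
      rcases lt_trichotomy (t - s) 0 with h | h | h
      · exact absurd (hq'eq ▸ hfrN (hVfr hyq))
          (hPneg q hxq (t - s) (by simp only [mem_Ioo] at hxt hyt; linarith [hxt.1, hyt.2]) h)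
      · exact h
      · exact absurd (hq'eq ▸ hPpos q hxq (t - s)
          h (by simp only [mem_Ioo] at hxt hyt; linarith [hxt.2, hyt.1]))
          fun hc => hfrI q' (hVfr hyq) hc
    have hts : t = s := by linarith [sub_eq_zero.mp hu0]
    have hqq : q = q' := by rw [← hq'eq, hu0, hφzero]
    simp [hts, hqq]
  -- key neighbourhood lemma
  have hkey : ∀ q₀ ∈ V, ∀ G' : Set X, IsOpen G' → q₀ ∈ G' → ∀ η : ℝ, 0 < η → η ≤ ε/2 →
      ∃ σ > 0, ∀ x : X, dist x q₀ < σ →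
        ∃ s ∈ Icc (-η) η, ∃ q ∈ G' ∩ V, x = φ s q := by
    intro q₀ hq₀ G' hG' hq₀G η hη hηδ
    set C' : Set X := frontier N \ (G' ∩ Wv) with hC'def
    have hC' : IsClosed C' := isClosed_frontier.sdiff (hG'.inter hWvopen)
    have h0 : ∀ t ∈ Icc (-η) η, φ t q₀ ∉ C' := by
      intro t ht hmem
      rcases lt_trichotomy t 0 with h | h | h
      · exact hPneg q₀ hq₀ t (by linarith [ht.1]) h (hfrN hmem.1)
      · subst h; rw [hφzero] at hmem; exact hmem.2 ⟨hq₀G, hq₀.1⟩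
      · exact hfrI _ hmem.1 (hPpos q₀ hq₀ t h (le_trans ht.2 hηδ))
    have h1 := htube q₀ C' hC' η h0
    have h2 : ∀ᶠ x in nhds q₀, φ η x ∈ interior N :=
      ((isOpen_interior.preimage (hφt η)).eventually_mem
        (by exact hPpos q₀ hq₀ η hη hηδ))
    have h3 : ∀ᶠ x in nhds q₀, φ (-η) x ∉ N := by
      have hopen : IsOpen {x : X | φ (-η) x ∉ N} := by
        have : {x : X | φ (-η) x ∉ N} = (φ (-η) ⁻¹' N)ᶜ := rfl
        rw [this]; exact (hNc.preimage (hφt (-η))).isOpen_compl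
      exact hopen.eventually_mem (hPneg q₀ hq₀ (-η) (by linarith) (by linarith))
    obtain ⟨σ, hσ, hball'⟩ := Metric.eventually_nhds_iff.mp ((h1.and h2).and h3)
    refine ⟨σ, hσ, ?_⟩
    intro x hx
    obtain ⟨⟨hx1, hx2⟩, hx3⟩ := hball' hx
    obtain ⟨t', ht', hC1, hC2, _⟩ :=
      crossing_aux (f := fun s => φ s x) (horb x) hNc
        (by linarith : -η < η) hx3 (interior_subset hx2)
    have hfr' : φ t' x ∈ frontier N := by
      rw [frontier_eq_closure_inter_closure, hNc.closure_eq]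
      exact ⟨hC1, hC2⟩
    have hnC' : φ t' x ∉ C' := hx1 t' ⟨le_of_lt ht'.1, ht'.2⟩
    have hGWv : φ t' x ∈ G' ∩ Wv := by
      by_contra h
      exact hnC' ⟨hfr', h⟩
    refine ⟨-t', ⟨by linarith [ht'.2], by linarith [ht'.1]⟩, φ t' x,
      ⟨hGWv.1, hGWv.2, hfr'⟩, (hinv t' x).symm⟩
  -- master openness lemma
  have hmaster : ∀ S : Set (ℝ × X), IsOpen S →
      IsOpen (Φ '' (S ∩ Ioo (-(ε/4)) (ε/4) ×ˢ V)) := by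
    intro S hS
    rw [isOpen_iff_mem_nhds]
    rintro y ⟨⟨t₀, q₀⟩, ⟨hmemS, hmemdom⟩, rfl⟩
    obtain ⟨ht₀, hq₀⟩ := mem_prod.mp hmemdom
    simp only [mem_Ioo] at ht₀
    obtain ⟨u, v, hu, hv, ht₀u, hq₀v, huv⟩ := isOpen_prod_iff.mp hS t₀ q₀ hmemS
    obtain ⟨α, hα, hαu⟩ := Metric.isOpen_iff.mp hu t₀ ht₀u
    have habs : |t₀| < ε/4 := abs_lt.mpr ⟨ht₀.1, ht₀.2⟩
    set m := min α (ε/4 - |t₀|) with hmdef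
    have hm : 0 < m := lt_min hα (by linarith)
    set η := min (m/2) (ε/2) with hηdef
    have hη0 : 0 < η := lt_min (by linarith) (by linarith)
    have hηδ₁ : η ≤ ε/2 := min_le_right _ _
    have hηα : η < α := by
      have h1 : η ≤ m/2 := min_le_left _ _
      have h2 : m ≤ α := min_le_left _ _
      linarith
    have hηm : η < ε/4 - |t₀| := by
      have h1 : η ≤ m/2 := min_le_left _ _
      have h2 : m ≤ ε/4 - |t₀| := min_le_right _ _
      linarith
    obtain ⟨σ, hσ, hkey'⟩ := hkey q₀ hq₀ v hv hq₀v η hη0 hηδ₁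
    refine mem_nhds_iff.mpr ⟨φ (-t₀) ⁻¹' Metric.ball q₀ σ, ?_,
      Metric.isOpen_ball.preimage (hφt (-t₀)), ?_⟩
    · intro z hz
      obtain ⟨s, hs, q, ⟨hqG, hqV⟩, hxq⟩ :=
        hkey' (φ (-t₀) z) (Metric.mem_ball.mp hz)
      have habs2 : |s| ≤ η := abs_le.mpr hs
      refine ⟨(t₀ + s, q), ⟨huv ⟨hαu ?_, hqG⟩, mem_prod.mpr ⟨?_, hqV⟩⟩, ?_⟩
      · rw [Metric.mem_ball, Real.dist_eq]
        have : t₀ + s - t₀ = s := by ring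
        rw [this]
        exact lt_of_le_of_lt habs2 hηα
      · have h1 : |t₀ + s| ≤ |t₀| + |s| := abs_add_le _ _
        have h2 : |t₀ + s| < ε/4 := by linarith
        exact abs_lt.mp h2
      · show φ (t₀ + s) q = z
        rw [hφadd t₀ s q, ← hxq, hinv2]
    · show φ (-t₀) (Φ (t₀, q₀)) ∈ Metric.ball q₀ σ
      have : Φ (t₀, q₀) = φ t₀ q₀ := rfl
      rw [this, hinv]
      exact Metric.mem_ball_self hσ
  have hUopen : IsOpen (Φ '' (Ioo (-(ε/4)) (ε/4) ×ˢ V)) := by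
    have := hmaster univ isOpen_univ
    rwa [univ_inter] at this
  have hpU : p ∈ Φ '' (Ioo (-(ε/4)) (ε/4) ×ˢ V) :=
    ⟨(0, p), mem_prod.mpr ⟨⟨by linarith, by linarith⟩, hpV⟩, hφzero p⟩
  have hcap : Φ '' (Ioo (-(ε/4)) (ε/4) ×ˢ V) ∩ N = Φ '' (Ico 0 (ε/4) ×ˢ V) := by
    ext y
    constructor
    · rintro ⟨⟨⟨t, q⟩, hmem, rfl⟩, hyN⟩
      obtain ⟨hmt, hmq⟩ := mem_prod.mp hmem
      simp only [mem_Ioo] at hmt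
      rcases lt_or_ge t 0 with h | h
      · exact absurd hyN (hPneg q hmq t (by linarith [hmt.1]) h)
      · exact ⟨(t, q), mem_prod.mpr ⟨⟨h, hmt.2⟩, hmq⟩, rfl⟩
    · rintro ⟨⟨t, q⟩, hmem, rfl⟩
      obtain ⟨hmt, hmq⟩ := mem_prod.mp hmem
      simp only [mem_Ico] at hmt
      refine ⟨⟨(t, q), mem_prod.mpr ⟨⟨by linarith [hmt.1], hmt.2⟩, hmq⟩, rfl⟩, ?_⟩
      rcases eq_or_lt_of_le hmt.1 with h | h
      · show φ t q ∈ N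
        rw [← h, hφzero]
        exact hfrN (hVfr hmq)
      · exact interior_subset (hPpos q hmq t h (by linarith [hmt.2]))
  -- the homeomorphism
  have hbij : BijOn Φ (Ioo (-(ε/4)) (ε/4) ×ˢ V) (Φ '' (Ioo (-(ε/4)) (ε/4) ×ˢ V)) :=
    hinj.bijOn_image
  set e0 := hbij.equiv Φ with he0def
  have he0 : ∀ x : (Ioo (-(ε/4)) (ε/4) ×ˢ V : Set (ℝ × X)), (e0 x : X) = Φ x := fun x => rfl
  have hcont : Continuous e0 :=
    Continuous.subtype_mk (hφcont.comp continuous_subtype_val) _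
  have hopenmap : IsOpenMap e0 := by
    intro T hT
    obtain ⟨S₀, hS₀, hTS⟩ := isOpen_induced_iff.mp hT
    have himg : IsOpen (Φ '' (S₀ ∩ Ioo (-(ε/4)) (ε/4) ×ˢ V)) := hmaster S₀ hS₀
    have heqset : (e0 '' T) = Subtype.val ⁻¹' (Φ '' (S₀ ∩ Ioo (-(ε/4)) (ε/4) ×ˢ V)) := by
      ext y
      constructor
      · rintro ⟨x, hxT, rfl⟩
        rw [← hTS] at hxT
        exact ⟨x.val, ⟨hxT, x.2⟩, (he0 x).symm⟩
      · rintro ⟨z, ⟨hzS, hzdom⟩, hzy⟩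
        refine ⟨⟨z, hzdom⟩, ?_, ?_⟩
        · rw [← hTS]; exact hzS
        · exact Subtype.ext (by rw [he0]; exact hzy)
    rw [heqset]
    exact himg.preimage continuous_subtype_val
  refine ⟨V, ε/4, by linarith, hVO, hVnhds, hinj, hUopen, hpU, hcap,
    Equiv.toHomeomorphOfContinuousOpen e0 hcont hopenmap, fun x => rfl⟩
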